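/- Fix γ ∈ (0,1). For every θ ∈ (0,1), writing π*(θ) = γθ/(1 + θ(γ−1)) and J(π) = (1−θ)·log((1−θ)/(1−π)) + θ·log(θ/π) + log(1 + (γ−1)(1−π)), it holds that J(π*(θ)) = log γ − θ·log γ = (1−θ)·log γ. Consequently the map θ ↦ J(π*(θ)) is affine in θ with derivative identically equal to −log γ on (0,1). -/

import Mathlib

open Set

lemma flattening_key (γ : ℝ) (hγ : γ ∈ Ioo (0 : ℝ) 1)
    (πs : ℝ → ℝ) (hπs : ∀ θ : ℝ, πs θ = γ * θ / (1 + θ * (γ - 1)))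
    (F : ℝ → ℝ)
    (hF : ∀ θ : ℝ, F θ = (1 - θ) * Real.log ((1 - θ) / (1 - πs θ))
      + θ * Real.log (θ / πs θ) + Real.log (1 + (γ - 1) * (1 - πs θ))) :
    ∀ θ ∈ Ioo (0 : ℝ) 1, F θ = Real.log γ - θ * Real.log γ := by
  obtain ⟨hγ0, hγ1⟩ := hγ
  intro θ ⟨hθ0, hθ1⟩
  set d : ℝ := 1 + θ * (γ - 1) with hd
  have hdpos : 0 < d := by nlinarith
  have hdne : d ≠ 0 := ne_of_gt hdpos
  have hγne : γ ≠ 0 := ne_of_gt hγ0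
  have h1 : (1 - θ) / (1 - πs θ) = d := by
    rw [hπs]
    rw [show 1 - γ * θ / d = (1 - θ) / d by field_simp; ring,
      div_div_eq_mul_div]
    rw [mul_comm, mul_div_assoc, div_self (by linarith : (1:ℝ) - θ ≠ 0), mul_one]
  have h2 : θ / πs θ = d / γ := by
    rw [hπs, ← hd]
    rw [div_eq_div_iff (by positivity) hγne]
    field_simp
  have h3 : 1 + (γ - 1) * (1 - πs θ) = γ / d := by
    rw [hπs, ← hd]; field_simp; ring
  rw [hF, h1, h2, h3, Real.log_div hdne hγne, Real.log_div hγne hdne]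
  ring

theorem flattening_hyperprior_optimal_value (γ : ℝ) (hγ : γ ∈ Ioo (0 : ℝ) 1)
    (πs : ℝ → ℝ) (hπs : ∀ θ : ℝ, πs θ = γ * θ / (1 + θ * (γ - 1)))
    (F : ℝ → ℝ)
    (hF : ∀ θ : ℝ, F θ = (1 - θ) * Real.log ((1 - θ) / (1 - πs θ))
      + θ * Real.log (θ / πs θ) + Real.log (1 + (γ - 1) * (1 - πs θ))) :
    ∀ θ ∈ Ioo (0 : ℝ) 1,
      F θ = Real.log γ - θ * Real.log γ ∧
      F θ = (1 - θ) * Real.log γ ∧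
      HasDerivAt F (-(Real.log γ)) θ := by
  have key := flattening_key γ hγ πs hπs F hF
  intro θ hθ
  refine ⟨key θ hθ, by rw [key θ hθ]; ring, ?_⟩
  have hg : HasDerivAt (fun t : ℝ => Real.log γ - t * Real.log γ)
      (-(Real.log γ)) θ := by
    simpa using (HasDerivAt.const_sub (Real.log γ)
      ((hasDerivAt_id θ).mul_const (Real.log γ)))
  refine hg.congr_of_eventuallyEq ?_
  filter_upwards [isOpen_Ioo.mem_nhds hθ] with t ht
  exact key t ht
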